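/- Let L be a unimodular even lattice containing S ⊕ T with both S and T primitive and S^⊥ = T. Then |disc S| = |disc T|, and the anti-isometry ψ arising from the kernel is defined on all of disc S, giving an anti-isomorphism disc S → disc T. -/

import Mathlib

open Matrix

/-- The group `ℚ/2ℤ`. -/
abbrev QMod2 : Type := ℚ ⧸ AddSubgroup.zmultiples (2 : ℚ)
/-- The group `ℚ/ℤ`. -/
abbrev QMod1 : Type := ℚ ⧸ AddSubgroup.zmultiples (1 : ℚ)

/-- The natural isomorphism `2 : ℚ/ℤ → ℚ/2ℤ`, `r ↦ 2r`. -/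
def twoHom : QMod1 →+ QMod2 :=
  QuotientAddGroup.map _ _ (AddMonoidHom.mk' (fun r : ℚ => 2 * r) (fun a b => by ring))
    (by
      intro x hx
      obtain ⟨k, hk⟩ := AddSubgroup.mem_zmultiples_iff.mp hx
      refine AddSubgroup.mem_comap.mpr (AddSubgroup.mem_zmultiples_iff.mpr ⟨k, ?_⟩)
      simp only [AddMonoidHom.mk'_apply]
      rw [← hk]
      simp [zsmul_eq_mul]
      ring)

variable {ι : Type} [Fintype ι]

/-- The `ℚ`-bilinear extension of the bilinear form with integral Gram matrix `M`. -/
def Bq (M : Matrix ι ι ℤ) (x y : ι → ℚ) : ℚ := x ⬝ᵥ (M.map (Int.cast : ℤ → ℚ)).mulVec y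

/-- A rational number is integral. -/
def IsInt (r : ℚ) : Prop := ∃ z : ℤ, r = (z : ℚ)

/-- The lattice `L` itself, i.e. the integral vectors, as a subgroup of `L ⊗ ℚ = ι → ℚ`. -/
def intSub (ι : Type) [Fintype ι] : AddSubgroup (ι → ℚ) where
  carrier := {x | ∀ i, IsInt (x i)}
  add_mem' := by
    rintro a b ha hb i
    obtain ⟨z, hz⟩ := ha i; obtain ⟨w, hw⟩ := hb i
    exact ⟨z + w, by simp [Pi.add_apply, hz, hw]⟩
  zero_mem' := fun i => ⟨0, by simp⟩
  neg_mem' := by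
    rintro a ha i
    obtain ⟨z, hz⟩ := ha i
    exact ⟨-z, by simp [Pi.neg_apply, hz]⟩

/-- The dual lattice of a subgroup `A ⊂ L ⊗ ℚ` w.r.t. the form `M`:
all vectors pairing integrally with all of `A`. -/
def dualOf (M : Matrix ι ι ℤ) (A : AddSubgroup (ι → ℚ)) : AddSubgroup (ι → ℚ) where
  carrier := {x | ∀ y ∈ A, IsInt (Bq M x y)}
  add_mem' := by
    rintro a b ha hb y hy
    obtain ⟨z, hz⟩ := ha y hy; obtain ⟨w, hw⟩ := hb y hy
    refine ⟨z + w, ?_⟩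
    have h : Bq M (a + b) y = Bq M a y + Bq M b y := by
      simp [Bq, add_dotProduct]
    rw [h, hz, hw]; push_cast; ring
  zero_mem' := by
    intro y hy
    exact ⟨0, by simp [Bq]⟩
  neg_mem' := by
    rintro a ha y hy
    obtain ⟨z, hz⟩ := ha y hy
    refine ⟨-z, ?_⟩
    have h : Bq M (-a) y = -Bq M a y := by simp [Bq, neg_dotProduct]
    rw [h, hz]; push_cast; ring

/-- The dual lattice `L^∨`. -/
abbrev dualSub (M : Matrix ι ι ℤ) : AddSubgroup (ι → ℚ) := dualOf M (intSub ι)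

/-- The discriminant group `disc L = L^∨/L`. -/
abbrev discQuot (M : Matrix ι ι ℤ) : Type :=
  dualSub M ⧸ (intSub ι).addSubgroupOf (dualSub M)


section Helpers

noncomputable instance : DivisibleBy ℚ ℕ := AddGroup.divisibleByNatOfDivisibleByInt ℚ
noncomputable instance : DivisibleBy QMod1 ℤ := AddGroup.divisibleByIntOfDivisibleByNat QMod1

lemma isInt_mem_zmultiples {r : ℚ} : IsInt r ↔ r ∈ AddSubgroup.zmultiples (1 : ℚ) := by
  rw [AddSubgroup.mem_zmultiples_iff]
  constructor
  · rintro ⟨z, rfl⟩; exact ⟨z, by simp⟩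
  · rintro ⟨k, hk⟩; exact ⟨k, by rw [← hk]; simp⟩

lemma mk_eq_zero_iff {r : ℚ} : (QuotientAddGroup.mk r : QMod1) = 0 ↔ IsInt r := by
  rw [QuotientAddGroup.eq_zero_iff, isInt_mem_zmultiples]

lemma isInt_add {a b : ℚ} (ha : IsInt a) (hb : IsInt b) : IsInt (a + b) := by
  obtain ⟨z, rfl⟩ := ha; obtain ⟨w, rfl⟩ := hb; exact ⟨z + w, by push_cast; ring⟩

lemma Bq_add_right (M : Matrix ι ι ℤ) (x y z : ι → ℚ) :
    Bq M x (y + z) = Bq M x y + Bq M x z := by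
  simp [Bq, Matrix.mulVec_add, dotProduct_add]

lemma Bq_add_left (M : Matrix ι ι ℤ) (x y z : ι → ℚ) :
    Bq M (x + y) z = Bq M x z + Bq M y z := by
  simp [Bq, add_dotProduct]

lemma Bq_sub_right (M : Matrix ι ι ℤ) (x y z : ι → ℚ) :
    Bq M x (y - z) = Bq M x y - Bq M x z := by
  simp [Bq, Matrix.mulVec_sub, dotProduct_sub]

lemma Bq_zero_right (M : Matrix ι ι ℤ) (x : ι → ℚ) : Bq M x 0 = 0 := by
  simp [Bq]

lemma Bq_comm (M : Matrix ι ι ℤ) (h : M.IsSymm) (x y : ι → ℚ) : Bq M x y = Bq M y x := by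
  have hs : (M.map (Int.cast : ℤ → ℚ)).IsSymm := h.map _
  rw [Bq, Bq, Matrix.dotProduct_mulVec, ← hs.eq, Matrix.vecMul_transpose, dotProduct_comm, hs.eq]

lemma Bq_cast (M : Matrix ι ι ℤ) (x y : ι → ℤ) :
    Bq M (fun i => (x i : ℚ)) (fun i => (y i : ℚ)) = ((x ⬝ᵥ M.mulVec y : ℤ) : ℚ) := by
  simp [Bq, dotProduct, mulVec, Matrix.map_apply]

lemma Bq_int (M : Matrix ι ι ℤ) {x y : ι → ℚ} (hx : ∀ i, IsInt (x i)) (hy : ∀ i, IsInt (y i)) :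
    IsInt (Bq M x y) := by
  have hx' : x = fun i => ((fun i => (hx i).choose) i : ℚ) := funext fun i => (hx i).choose_spec
  have hy' : y = fun i => ((fun i => (hy i).choose) i : ℚ) := funext fun i => (hy i).choose_spec
  rw [hx', hy', Bq_cast]
  exact ⟨_, rfl⟩

lemma Bq_even (M : Matrix ι ι ℤ) (he : ∀ x : ι → ℤ, 2 ∣ x ⬝ᵥ M.mulVec x)
    {x : ι → ℚ} (hx : ∀ i, IsInt (x i)) : ∃ z : ℤ, Bq M x x = 2 * z := by
  have hx' : x = fun i => ((fun i => (hx i).choose) i : ℚ) := funext fun i => (hx i).choose_spec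
  obtain ⟨k, hk⟩ := he (fun i => (hx i).choose)
  refine ⟨k, ?_⟩
  rw [hx', Bq_cast, hk]
  push_cast; ring

lemma stepB {ι₁ ι₂ : Type} [Fintype ι₁] [DecidableEq ι₁] [Fintype ι₂] [DecidableEq ι₂]
    (M₁ : Matrix ι₁ ι₁ ℤ) (M₂ : Matrix ι₂ ι₂ ℤ) (hd₂ : M₂.det ≠ 0)
    (L : AddSubgroup ((ι₁ → ℚ) × (ι₂ → ℚ)))
    (hNex : ∃ N : ℕ, (N : ℚ) ≠ 0 ∧ ∀ y ∈ L, ∀ i, IsInt ((N : ℚ) * y.2 i))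
    (hprim₁ : ∀ x ∈ L, x.2 = 0 → x.1 ∈ intSub ι₁)
    (huni : ∀ v : (ι₁ → ℚ) × (ι₂ → ℚ),
      (∀ y ∈ L, IsInt (Bq M₁ v.1 y.1 + Bq M₂ v.2 y.2)) → v ∈ L)
    (u : ι₁ → ℚ) (hu : ∀ y ∈ intSub ι₁, IsInt (Bq M₁ u y)) :
    ∃ v, (u, v) ∈ L := by
  classical
  obtain ⟨N, hNQ, hNL⟩ := hNex
  set Y : AddSubgroup (ι₂ → ℚ) :=
    { carrier := {x | ∀ i, IsInt ((N : ℚ) * x i)}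
      add_mem' := by
        rintro a b ha hb i
        have := isInt_add (ha i) (hb i); rwa [← mul_add] at this
      zero_mem' := fun i => ⟨0, by simp⟩
      neg_mem' := by
        rintro a ha i
        obtain ⟨z, hz⟩ := ha i
        refine ⟨-z, ?_⟩
        rw [Pi.neg_apply, show (N : ℚ) * -(a i) = -((N : ℚ) * a i) by ring, hz]
        push_cast; ring } with hYdef
  set H : AddSubgroup (ι₂ → ℚ) := L.map (AddMonoidHom.snd _ _) with hHdef
  have hHY : H ≤ Y := by
    rintro t ht
    obtain ⟨y, hy, rfl⟩ := ht
    exact fun i => hNL y hy i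
  have hpick : ∀ t ∈ H, ∃ y, y ∈ L ∧ y.2 = t := by
    intro t ht; obtain ⟨y, hy, rfl⟩ := ht; exact ⟨y, hy, rfl⟩
  have wd : ∀ y ∈ L, ∀ y' ∈ L, y.2 = y'.2 →
      (QuotientAddGroup.mk (-Bq M₁ u y.1) : QMod1) = QuotientAddGroup.mk (-Bq M₁ u y'.1) := by
    intro y hy y' hy' hyy
    rw [QuotientAddGroup.eq]
    have hmem : (y - y') ∈ L := sub_mem hy hy'
    have h2 : (y - y').2 = 0 := by simp [hyy]
    have h1 := hprim₁ _ hmem h2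
    have hint : IsInt (Bq M₁ u (y.1 - y'.1)) := hu _ h1
    rw [Bq_sub_right] at hint
    rw [← isInt_mem_zmultiples]
    obtain ⟨z, hz⟩ := hint
    exact ⟨z, by rw [← hz]; ring⟩
  set pk : ∀ _ : H, (ι₁ → ℚ) × (ι₂ → ℚ) := fun t => (hpick t.1 t.2).choose with hpkdef
  have hpk1 : ∀ t : H, pk t ∈ L := fun t => (hpick t.1 t.2).choose_spec.1
  have hpk2 : ∀ t : H, (pk t).2 = (t : ι₂ → ℚ) := fun t => (hpick t.1 t.2).choose_spec.2
  set f₀ : H →+ QMod1 := AddMonoidHom.mk'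
      (fun t => QuotientAddGroup.mk (-Bq M₁ u (pk t).1))
      (by
        intro t s
        have hsum : (pk t + pk s) ∈ L := add_mem (hpk1 t) (hpk1 s)
        have h2 : (pk (t + s)).2 = (pk t + pk s).2 := by
          rw [hpk2 (t + s)]
          show ((t : ι₂ → ℚ) + s) = _
          rw [Prod.snd_add, hpk2 t, hpk2 s]
        show QuotientAddGroup.mk (-Bq M₁ u (pk (t+s)).1) = _
        rw [wd _ (hpk1 (t + s)) _ hsum h2]
        show _ = QuotientAddGroup.mk _ + QuotientAddGroup.mk _
        rw [← QuotientAddGroup.mk_add]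
        congr 1
        rw [Prod.fst_add, Bq_add_right]
        ring) with hf₀def
  have hf₀ : ∀ y (hy : y ∈ L), f₀ ⟨y.2, ⟨y, hy, rfl⟩⟩ =
      QuotientAddGroup.mk (-Bq M₁ u y.1) := by
    intro y hy
    exact wd _ (hpk1 ⟨y.2, ⟨y, hy, rfl⟩⟩) y hy (hpk2 _)
  obtain ⟨g, hg⟩ := (Module.Baer.of_divisible QMod1).extension_property_addMonoidHom
    (AddSubgroup.inclusion hHY) (AddSubgroup.inclusion_injective hHY) f₀
  set σ : ι₂ → Y := fun j => ⟨fun i => (N : ℚ)⁻¹ * (Pi.single j (1:ℚ) : ι₂ → ℚ) i, by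
    intro i
    by_cases h : i = j
    · subst h
      refine ⟨1, ?_⟩
      show (N : ℚ) * ((N : ℚ)⁻¹ * (Pi.single i (1:ℚ) : ι₂ → ℚ) i) = ((1 : ℤ) : ℚ)
      rw [Pi.single_eq_same]
      field_simp
      norm_num
    · refine ⟨0, ?_⟩
      show (N : ℚ) * ((N : ℚ)⁻¹ * (Pi.single j (1:ℚ) : ι₂ → ℚ) i) = ((0 : ℤ) : ℚ)
      simp [Pi.single_apply, h]⟩ with hσdef
  set r : ι₂ → ℚ := fun j => (QuotientAddGroup.mk_surjective (g (σ j))).choose with hrdef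
  have hr : ∀ j, (QuotientAddGroup.mk (r j) : QMod1) = g (σ j) :=
    fun j => (QuotientAddGroup.mk_surjective (g (σ j))).choose_spec
  set c : ι₂ → ℚ := fun j => (N : ℚ) * r j with hcdef
  have hrep : ∀ t : Y, (QuotientAddGroup.mk (c ⬝ᵥ (t : ι₂ → ℚ)) : QMod1) = g t := by
    intro t
    have hz : ∀ j, ∃ z : ℤ, (N : ℚ) * (t : ι₂ → ℚ) j = z := t.2
    set z : ι₂ → ℤ := fun j => (hz j).choose with hzdef
    have hzs : ∀ j, (N : ℚ) * (t : ι₂ → ℚ) j = z j := fun j => (hz j).choose_spec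
    have ht : t = ∑ j, z j • σ j := by
      apply Subtype.ext
      have hco : ((∑ j, z j • σ j : Y) : ι₂ → ℚ) = ∑ j, z j • (σ j : ι₂ → ℚ) := by
        rw [show ((∑ j, z j • σ j : Y) : ι₂ → ℚ) = Y.subtype (∑ j, z j • σ j) from rfl,
          map_sum]
        exact Finset.sum_congr rfl fun j _ => map_zsmul Y.subtype _ _
      rw [hco]
      funext i
      rw [Finset.sum_apply]
      have hterm : ∀ j, (z j • (σ j : ι₂ → ℚ)) i = if i = j then (t : ι₂ → ℚ) i else 0 := by
        intro j
        rw [Pi.smul_apply, zsmul_eq_mul]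
        show (z j : ℚ) * ((N : ℚ)⁻¹ * (Pi.single j (1:ℚ) : ι₂ → ℚ) i) = _
        by_cases h : i = j
        · subst h
          rw [Pi.single_eq_same, if_pos rfl, ← hzs i]
          field_simp
        · simp [Pi.single_apply, h]
      simp only [hterm]
      simp
    calc (QuotientAddGroup.mk (c ⬝ᵥ (t : ι₂ → ℚ)) : QMod1)
        = QuotientAddGroup.mk (∑ j, z j • r j) := by
          congr 1
          rw [dotProduct]
          congr 1
          funext j
          show (N : ℚ) * r j * (t : ι₂ → ℚ) j = _
          rw [zsmul_eq_mul, mul_comm ((N : ℚ)) (r j), mul_assoc, hzs j]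
          ring
      _ = ∑ j, z j • (QuotientAddGroup.mk (r j) : QMod1) := by
          rw [show ∀ s : ℚ, (QuotientAddGroup.mk s : QMod1) = QuotientAddGroup.mk' _ s
            from fun s => rfl, map_sum]
          exact Finset.sum_congr rfl fun j _ => map_zsmul (QuotientAddGroup.mk' _) _ _
      _ = ∑ j, z j • g (σ j) := by simp only [hr]
      _ = g (∑ j, z j • σ j) := by
          rw [map_sum]
          exact Finset.sum_congr rfl fun j _ => (map_zsmul g _ _).symm
      _ = g t := by rw [← ht]
  set Mq : Matrix ι₂ ι₂ ℚ := M₂.map (Int.cast : ℤ → ℚ) with hMq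
  have hdet : IsUnit Mq.det := by
    rw [isUnit_iff_ne_zero, hMq, show M₂.map (Int.cast : ℤ → ℚ)
      = (Int.castRingHom ℚ).mapMatrix M₂ from rfl, ← RingHom.map_det]
    exact_mod_cast Int.cast_ne_zero.mpr hd₂
  set v : ι₂ → ℚ := Matrix.vecMul c Mq⁻¹ with hvdef
  have hv : ∀ t : ι₂ → ℚ, Bq M₂ v t = c ⬝ᵥ t := by
    intro t
    rw [Bq, Matrix.dotProduct_mulVec]
    show Matrix.vecMul (Matrix.vecMul c Mq⁻¹) Mq ⬝ᵥ t = c ⬝ᵥ t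
    rw [Matrix.vecMul_vecMul, Matrix.nonsing_inv_mul _ hdet, Matrix.vecMul_one]
  refine ⟨v, huni (u, v) ?_⟩
  intro y hy
  have hyH : y.2 ∈ H := ⟨y, hy, rfl⟩
  have hmk : (QuotientAddGroup.mk (Bq M₂ v y.2) : QMod1) =
      QuotientAddGroup.mk (-Bq M₁ u y.1) := by
    rw [hv y.2]
    have h1 : (⟨y.2, hHY hyH⟩ : Y) = AddSubgroup.inclusion hHY ⟨y.2, hyH⟩ := rfl
    rw [hrep ⟨y.2, hHY hyH⟩, h1, ← AddMonoidHom.comp_apply, hg, hf₀ y hy]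
  rw [QuotientAddGroup.eq] at hmk
  rw [← isInt_mem_zmultiples] at hmk
  have : IsInt (Bq M₁ (u, v).1 y.1 + Bq M₂ (u, v).2 y.2) := by
    obtain ⟨k, hk⟩ := hmk
    exact ⟨-k, by rw [show (((-k : ℤ)) : ℚ) = -(k:ℚ) by push_cast; ring, ← hk]; ring⟩
  exact this

end Helpers

/-- let `L` be an even unimodular finite index extension of
`S ⊕ T` with `S`, `T` primitive and `S^⊥ = T`.  Then `|disc S| = |disc T|` and
the anti-isometry `ψ` arising from the kernel is defined on all of `disc S`,
giving an anti-isomorphism `disc S → disc T`. -/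
theorem stmt10 {ι₁ ι₂ : Type} [Fintype ι₁] [DecidableEq ι₁] [Fintype ι₂] [DecidableEq ι₂]
    (M₁ : Matrix ι₁ ι₁ ℤ) (M₂ : Matrix ι₂ ι₂ ℤ)
    (h₁ : M₁.IsSymm) (h₂ : M₂.IsSymm) (hd₁ : M₁.det ≠ 0) (hd₂ : M₂.det ≠ 0)
    (he₁ : ∀ x : ι₁ → ℤ, 2 ∣ x ⬝ᵥ M₁.mulVec x) (he₂ : ∀ x : ι₂ → ℤ, 2 ∣ x ⬝ᵥ M₂.mulVec x)
    (L : AddSubgroup ((ι₁ → ℚ) × (ι₂ → ℚ)))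
    (hSL : (intSub ι₁).prod (intSub ι₂) ≤ L)
    (hint : ∀ x ∈ L, ∀ y ∈ L, IsInt (Bq M₁ x.1 y.1 + Bq M₂ x.2 y.2))
    (hev : ∀ x ∈ L, ∃ z : ℤ, Bq M₁ x.1 x.1 + Bq M₂ x.2 x.2 = 2 * z)
    (hfin : Finite (L ⧸ ((intSub ι₁).prod (intSub ι₂)).addSubgroupOf L))
    (hprim₁ : ∀ x ∈ L, x.2 = 0 → x.1 ∈ intSub ι₁)
    (hprim₂ : ∀ x ∈ L, x.1 = 0 → x.2 ∈ intSub ι₂)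
    -- unimodularity of `L`: `L` equals its own dual lattice
    (huni : ∀ v : (ι₁ → ℚ) × (ι₂ → ℚ),
      (∀ y ∈ L, IsInt (Bq M₁ v.1 y.1 + Bq M₂ v.2 y.2)) → v ∈ L) :
    Nat.card (discQuot M₁) = Nat.card (discQuot M₂) ∧
    ∃ ψ : discQuot M₁ ≃+ discQuot M₂,
      (∀ x ∈ L, ∀ (hx1 : x.1 ∈ dualSub M₁) (hx2 : x.2 ∈ dualSub M₂),
        ψ (QuotientAddGroup.mk ⟨x.1, hx1⟩) = QuotientAddGroup.mk ⟨x.2, hx2⟩) ∧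
      (∀ (u : dualSub M₁) (v : dualSub M₂),
        ψ (QuotientAddGroup.mk u) = QuotientAddGroup.mk v →
          ∃ z : ℤ, Bq M₁ (u : ι₁ → ℚ) (u : ι₁ → ℚ)
            + Bq M₂ (v : ι₂ → ℚ) (v : ι₂ → ℚ) = 2 * z) := by

  classical
  -- a common denominator for L
  set N : ℕ := Nat.card (L ⧸ ((intSub ι₁).prod (intSub ι₂)).addSubgroupOf L) with hNdef
  have hN : 0 < N := Nat.card_pos
  have hNQ : (N : ℚ) ≠ 0 := by positivity
  have hNL : ∀ y ∈ L, (∀ i, IsInt ((N : ℚ) * y.1 i)) ∧ (∀ i, IsInt ((N : ℚ) * y.2 i)) := by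
    intro y hy
    have h0 : (N : ℕ) • (QuotientAddGroup.mk (⟨y, hy⟩ : L) :
        L ⧸ ((intSub ι₁).prod (intSub ι₂)).addSubgroupOf L) = 0 := card_nsmul_eq_zero'
    rw [← QuotientAddGroup.mk_nsmul, QuotientAddGroup.eq_zero_iff] at h0
    have h1 : ((N • (⟨y, hy⟩ : L) : L) : (ι₁ → ℚ) × (ι₂ → ℚ)) ∈
        (intSub ι₁).prod (intSub ι₂) := h0
    have h1' : (N • y) ∈ (intSub ι₁).prod (intSub ι₂) := h1
    constructor
    · intro i
      have := h1'.1 i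
      simpa [nsmul_eq_mul] using this
    · intro i
      have := h1'.2 i
      simpa [nsmul_eq_mul] using this
  -- the swapped lattice
  set Lsw : AddSubgroup ((ι₂ → ℚ) × (ι₁ → ℚ)) :=
    L.comap ((AddEquiv.prodComm : (ι₂ → ℚ) × (ι₁ → ℚ) ≃+ (ι₁ → ℚ) × (ι₂ → ℚ)).toAddMonoidHom)
    with hLswdef
  have hsw : ∀ x : (ι₂ → ℚ) × (ι₁ → ℚ), x ∈ Lsw ↔ (x.2, x.1) ∈ L := by
    intro x
    rw [hLswdef, AddSubgroup.mem_comap]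
    rfl
  -- dual membership of components of L
  have hA : ∀ x ∈ L, (x.1 ∈ dualSub M₁) ∧ (x.2 ∈ dualSub M₂) := by
    intro x hx
    constructor
    · intro w hw
      have h1 : ((w, 0) : (ι₁ → ℚ) × (ι₂ → ℚ)) ∈ L := hSL ⟨hw, zero_mem _⟩
      have := hint x hx (w, 0) h1
      rwa [Bq_zero_right, add_zero] at this
    · intro w hw
      have h1 : ((0, w) : (ι₁ → ℚ) × (ι₂ → ℚ)) ∈ L := hSL ⟨zero_mem _, hw⟩
      have := hint x hx (0, w) h1
      rwa [Bq_zero_right, zero_add] at this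
  -- gluing lemmas
  have hB1 : ∀ u : dualSub M₁, ∃ v, ((u : ι₁ → ℚ), v) ∈ L := by
    intro u
    exact stepB M₁ M₂ hd₂ L ⟨N, hNQ, fun y hy i => (hNL y hy).2 i⟩ hprim₁ huni u u.2
  have hB2 : ∀ v : dualSub M₂, ∃ u, (u, (v : ι₂ → ℚ)) ∈ L := by
    intro v
    have hprim' : ∀ x ∈ Lsw, x.2 = 0 → x.1 ∈ intSub ι₂ := by
      intro x hx h0
      exact hprim₂ (x.2, x.1) ((hsw x).mp hx) h0
    have huni' : ∀ w : (ι₂ → ℚ) × (ι₁ → ℚ),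
        (∀ y ∈ Lsw, IsInt (Bq M₂ w.1 y.1 + Bq M₁ w.2 y.2)) → w ∈ Lsw := by
      intro w hw
      rw [hsw]
      apply huni
      intro y hy
      have := hw (y.2, y.1) ((hsw (y.2, y.1)).mpr (by simpa using hy))
      rwa [add_comm] at this
    have hNex' : ∃ n : ℕ, (n : ℚ) ≠ 0 ∧ ∀ y ∈ Lsw, ∀ i, IsInt ((n : ℚ) * y.2 i) := by
      refine ⟨N, hNQ, fun y hy i => ?_⟩
      exact (hNL (y.2, y.1) ((hsw y).mp hy)).1 i
    obtain ⟨w, hw⟩ := stepB M₂ M₁ hd₁ Lsw hNex' hprim' huni' v v.2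
    exact ⟨w, (hsw ((v : ι₂ → ℚ), w)).mp hw⟩
  set F₁ : dualSub M₁ → (ι₂ → ℚ) := fun u => (hB1 u).choose with hF₁def
  have hF₁ : ∀ u : dualSub M₁, ((u : ι₁ → ℚ), F₁ u) ∈ L := fun u => (hB1 u).choose_spec
  set F₂ : dualSub M₂ → (ι₁ → ℚ) := fun v => (hB2 v).choose with hF₂def
  have hF₂ : ∀ v : dualSub M₂, (F₂ v, (v : ι₂ → ℚ)) ∈ L := fun v => (hB2 v).choose_spec
  -- quotient equalities from integral differences
  have wd2 : ∀ a b : dualSub M₂, ((b : ι₂ → ℚ) - a) ∈ intSub ι₂ →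
      (QuotientAddGroup.mk a : discQuot M₂) = QuotientAddGroup.mk b := by
    intro a b h
    rw [QuotientAddGroup.eq]
    rw [AddSubgroup.mem_addSubgroupOf]
    simpa [neg_add_eq_sub] using h
  have wd1 : ∀ a b : dualSub M₁, ((b : ι₁ → ℚ) - a) ∈ intSub ι₁ →
      (QuotientAddGroup.mk a : discQuot M₁) = QuotientAddGroup.mk b := by
    intro a b h
    rw [QuotientAddGroup.eq]
    rw [AddSubgroup.mem_addSubgroupOf]
    simpa [neg_add_eq_sub] using h
  -- the forward hom
  set G₁ : dualSub M₁ →+ discQuot M₂ := AddMonoidHom.mk'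
      (fun u => QuotientAddGroup.mk ⟨F₁ u, (hA _ (hF₁ u)).2⟩)
      (by
        intro a b
        show _ = QuotientAddGroup.mk _ + QuotientAddGroup.mk _
        rw [← QuotientAddGroup.mk_add]
        apply wd2
        show (F₁ a + F₁ b) - F₁ (a + b) ∈ intSub ι₂
        have h1 : (((a : ι₁ → ℚ) + b, F₁ a + F₁ b) : (ι₁ → ℚ) × (ι₂ → ℚ)) ∈ L := by
          have := add_mem (hF₁ a) (hF₁ b)
          simpa using this
        have h2 := hF₁ (a + b)
        have h3 : ((0, (F₁ a + F₁ b) - F₁ (a + b)) : (ι₁ → ℚ) × (ι₂ → ℚ)) ∈ L := by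
          have := sub_mem h1 h2
          simpa using this
        exact hprim₂ _ h3 rfl) with hG₁def
  set G₂ : dualSub M₂ →+ discQuot M₁ := AddMonoidHom.mk'
      (fun v => QuotientAddGroup.mk ⟨F₂ v, (hA _ (hF₂ v)).1⟩)
      (by
        intro a b
        show _ = QuotientAddGroup.mk _ + QuotientAddGroup.mk _
        rw [← QuotientAddGroup.mk_add]
        apply wd1
        show (F₂ a + F₂ b) - F₂ (a + b) ∈ intSub ι₁
        have h1 : ((F₂ a + F₂ b, (a : ι₂ → ℚ) + b) : (ι₁ → ℚ) × (ι₂ → ℚ)) ∈ L := by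
          have := add_mem (hF₂ a) (hF₂ b)
          simpa using this
        have h2 := hF₂ (a + b)
        have h3 : (((F₂ a + F₂ b) - F₂ (a + b), 0) : (ι₁ → ℚ) × (ι₂ → ℚ)) ∈ L := by
          have := sub_mem h1 h2
          simpa using this
        exact hprim₁ _ h3 rfl) with hG₂def
  have k₁ : ∀ u : dualSub M₁, u ∈ (intSub ι₁).addSubgroupOf (dualSub M₁) → G₁ u = 0 := by
    intro u hu
    rw [AddSubgroup.mem_addSubgroupOf] at hu
    show QuotientAddGroup.mk _ = 0
    rw [QuotientAddGroup.eq_zero_iff, AddSubgroup.mem_addSubgroupOf]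
    have h1 : (((u : ι₁ → ℚ), 0) : (ι₁ → ℚ) × (ι₂ → ℚ)) ∈ L := hSL ⟨hu, zero_mem _⟩
    have h3 : ((0, F₁ u) : (ι₁ → ℚ) × (ι₂ → ℚ)) ∈ L := by
      have := sub_mem (hF₁ u) h1
      simpa using this
    exact hprim₂ _ h3 rfl
  have k₂ : ∀ v : dualSub M₂, v ∈ (intSub ι₂).addSubgroupOf (dualSub M₂) → G₂ v = 0 := by
    intro v hv
    rw [AddSubgroup.mem_addSubgroupOf] at hv
    show QuotientAddGroup.mk _ = 0
    rw [QuotientAddGroup.eq_zero_iff, AddSubgroup.mem_addSubgroupOf]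
    have h1 : ((0, (v : ι₂ → ℚ)) : (ι₁ → ℚ) × (ι₂ → ℚ)) ∈ L := hSL ⟨zero_mem _, hv⟩
    have h3 : ((F₂ v, 0) : (ι₁ → ℚ) × (ι₂ → ℚ)) ∈ L := by
      have := sub_mem (hF₂ v) h1
      simpa using this
    exact hprim₁ _ h3 rfl
  set ψ₁ : discQuot M₁ →+ discQuot M₂ := QuotientAddGroup.lift _ G₁ k₁ with hψ₁def
  set ψ₂ : discQuot M₂ →+ discQuot M₁ := QuotientAddGroup.lift _ G₂ k₂ with hψ₂def
  have hψ₁mk : ∀ u : dualSub M₁, ψ₁ (QuotientAddGroup.mk u) =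
      QuotientAddGroup.mk ⟨F₁ u, (hA _ (hF₁ u)).2⟩ := fun u => rfl
  have hψ₂mk : ∀ v : dualSub M₂, ψ₂ (QuotientAddGroup.mk v) =
      QuotientAddGroup.mk ⟨F₂ v, (hA _ (hF₂ v)).1⟩ := fun v => rfl
  have hleft : ∀ q : discQuot M₁, ψ₂ (ψ₁ q) = q := by
    intro q
    induction q using QuotientAddGroup.induction_on with
    | H u =>
      rw [hψ₁mk, hψ₂mk]
      apply wd1
      show ((u : ι₁ → ℚ)) - F₂ _ ∈ intSub ι₁
      have h1 := hF₂ (⟨F₁ u, (hA _ (hF₁ u)).2⟩ : dualSub M₂)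
      have h2 := hF₁ u
      have h3 : (((u : ι₁ → ℚ) - F₂ ⟨F₁ u, (hA _ (hF₁ u)).2⟩, 0) :
          (ι₁ → ℚ) × (ι₂ → ℚ)) ∈ L := by
        have := sub_mem h2 h1
        simpa using this
      exact hprim₁ _ h3 rfl
  have hright : ∀ q : discQuot M₂, ψ₁ (ψ₂ q) = q := by
    intro q
    induction q using QuotientAddGroup.induction_on with
    | H v =>
      rw [hψ₂mk, hψ₁mk]
      apply wd2
      show ((v : ι₂ → ℚ)) - F₁ _ ∈ intSub ι₂
      have h1 := hF₁ (⟨F₂ v, (hA _ (hF₂ v)).1⟩ : dualSub M₁)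
      have h2 := hF₂ v
      have h3 : ((0, (v : ι₂ → ℚ) - F₁ ⟨F₂ v, (hA _ (hF₂ v)).1⟩) :
          (ι₁ → ℚ) × (ι₂ → ℚ)) ∈ L := by
        have := sub_mem h2 h1
        simpa using this
      exact hprim₂ _ h3 rfl
  set ψ : discQuot M₁ ≃+ discQuot M₂ :=
    { toFun := ψ₁
      invFun := ψ₂
      left_inv := hleft
      right_inv := hright
      map_add' := ψ₁.map_add } with hψdef
  refine ⟨Nat.card_congr ψ.toEquiv, ψ, ?_, ?_⟩
  · rintro ⟨a, b⟩ hx hx1 hx2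
    show ψ₁ (QuotientAddGroup.mk ⟨a, hx1⟩) = QuotientAddGroup.mk ⟨b, hx2⟩
    rw [hψ₁mk]
    apply wd2
    show b - F₁ _ ∈ intSub ι₂
    have h1 := hF₁ (⟨a, hx1⟩ : dualSub M₁)
    have h3 : ((0, b - F₁ ⟨a, hx1⟩) : (ι₁ → ℚ) × (ι₂ → ℚ)) ∈ L := by
      have := sub_mem hx h1
      simpa [Prod.sub_def] using this
    exact hprim₂ _ h3 rfl
  · intro u v h
    have h' : (QuotientAddGroup.mk (⟨F₁ u, (hA _ (hF₁ u)).2⟩ : dualSub M₂) :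
        discQuot M₂) = QuotientAddGroup.mk v := by
      rw [← hψ₁mk]
      exact h
    rw [QuotientAddGroup.eq, AddSubgroup.mem_addSubgroupOf] at h'
    have hw : ((v : ι₂ → ℚ)) - F₁ u ∈ intSub ι₂ := by
      simpa [neg_add_eq_sub] using h'
    obtain ⟨z₀, hz₀⟩ := hev ((u : ι₁ → ℚ), F₁ u) (hF₁ u)
    obtain ⟨z₁, hz₁⟩ := (hA _ (hF₁ u)).2 _ hw
    obtain ⟨z₂, hz₂⟩ := Bq_even M₂ he₂ hw
    refine ⟨z₀ + z₁ + z₂, ?_⟩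
    have hvsplit : (v : ι₂ → ℚ) = F₁ u + ((v : ι₂ → ℚ) - F₁ u) := by ring
    have hexp : Bq M₂ (v : ι₂ → ℚ) (v : ι₂ → ℚ) =
        Bq M₂ (F₁ u) (F₁ u) + 2 * Bq M₂ (F₁ u) ((v : ι₂ → ℚ) - F₁ u)
          + Bq M₂ ((v : ι₂ → ℚ) - F₁ u) ((v : ι₂ → ℚ) - F₁ u) := by
      nth_rewrite 1 [hvsplit]
      nth_rewrite 2 [hvsplit]
      rw [Bq_add_left, Bq_add_right, Bq_add_right,
        Bq_comm M₂ h₂ ((v : ι₂ → ℚ) - F₁ u) (F₁ u)]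
      ring
    rw [hexp, hz₁, hz₂]
    rw [show Bq M₁ (u : ι₁ → ℚ) (u : ι₁ → ℚ) + (Bq M₂ (F₁ u) (F₁ u) + 2 * (z₁ : ℚ)
        + 2 * (z₂ : ℚ)) = (Bq M₁ (u : ι₁ → ℚ) (u : ι₁ → ℚ) + Bq M₂ (F₁ u) (F₁ u))
        + 2 * (z₁ : ℚ) + 2 * (z₂ : ℚ) by ring, hz₀]
    push_cast
    ring
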